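/- For every s ∈ (0,1/2) ∪ (1/2,1) and every h > 0, the modified weight w₁^M is strictly negative: w₁^M < 0. -/

import Mathlib

/-- The constant `c_{1,s-1} = -2^{2s-2}(s-1)Γ(s-1/2)/(π^{1/2}Γ(2-s))`. -/
noncomputable def c1m (s : ℝ) : ℝ :=
  -(2 : ℝ) ^ (2 * s - 2) * (s - 1) * Real.Gamma (s - 1 / 2) /
    (Real.sqrt Real.pi * Real.Gamma (2 - s))

/-- The hat function `φ̄₁(y) = 1 - |y|/h` for `|y| < h`, `0` otherwise. -/
noncomputable def phiBar1 (h y : ℝ) : ℝ := if |y| < h then 1 - |y| / h else 0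

/-- The weight `ω̄_k = c_{1,s-1} ∫_{-h}^{h} |kh - y|^{1-2s} φ̄₁(y) dy`. -/
noncomputable def omegaBar (s h : ℝ) (k : ℤ) : ℝ :=
  c1m s * ∫ y in (-h)..h, |(k : ℝ) * h - y| ^ (1 - 2 * s) * phiBar1 h y

/-- The weight `w_k = -(ω̄_{k-1} - 2ω̄_k + ω̄_{k+1})/h²`. -/
noncomputable def wgt (s h : ℝ) (k : ℤ) : ℝ :=
  -(omegaBar s h (k - 1) - 2 * omegaBar s h k + omegaBar s h (k + 1)) / h ^ 2

/-- The modified weight `ω̄₀^M`: `0` if `w₁ ≥ 0`, `ω̄₀` if `w₁ < 0`. -/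
noncomputable def omegaBar0M (s h : ℝ) : ℝ :=
  if 0 ≤ wgt s h 1 then 0 else omegaBar s h 0

section helpersX
open MeasureTheory intervalIntegral Set

lemma c1m_pos {s : ℝ} (hs : 1/2 < s) (hs1 : s < 1) : 0 < c1m s := by
  have hA : (0:ℝ) < 2 ^ (2*s - 2) := Real.rpow_pos_of_pos two_pos _
  have hG : 0 < Real.Gamma (s - 1/2) := Real.Gamma_pos_of_pos (by linarith)
  have hD : 0 < Real.sqrt Real.pi * Real.Gamma (2 - s) :=
    mul_pos (Real.sqrt_pos.mpr Real.pi_pos) (Real.Gamma_pos_of_pos (by linarith))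
  unfold c1m
  apply div_pos _ hD
  have : -(2:ℝ) ^ (2*s - 2) * (s - 1) * Real.Gamma (s - 1/2)
      = 2 ^ (2*s - 2) * (1 - s) * Real.Gamma (s - 1/2) := by ring
  rw [this]
  exact mul_pos (mul_pos hA (by linarith)) hG

lemma c1m_neg {s : ℝ} (hs : 0 < s) (hs1 : s < 1/2) : c1m s < 0 := by
  have hA : (0:ℝ) < 2 ^ (2*s - 2) := Real.rpow_pos_of_pos two_pos _
  have hG : Real.Gamma (s - 1/2) < 0 := by
    have hx : s - 1/2 ≠ 0 := by intro hc; nlinarith [hc]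
    have h1 : Real.Gamma ((s - 1/2) + 1) = (s - 1/2) * Real.Gamma (s - 1/2) :=
      Real.Gamma_add_one hx
    have h2 : 0 < Real.Gamma ((s - 1/2) + 1) := Real.Gamma_pos_of_pos (by linarith)
    nlinarith [h1, h2]
  have hD : 0 < Real.sqrt Real.pi * Real.Gamma (2 - s) :=
    mul_pos (Real.sqrt_pos.mpr Real.pi_pos) (Real.Gamma_pos_of_pos (by linarith))
  unfold c1m
  apply div_neg_of_neg_of_pos _ hD
  have : -(2:ℝ) ^ (2*s - 2) * (s - 1) * Real.Gamma (s - 1/2)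
      = 2 ^ (2*s - 2) * (1 - s) * Real.Gamma (s - 1/2) := by ring
  rw [this]
  exact mul_neg_of_pos_of_neg (mul_pos hA (by linarith)) hG

lemma om_congr {h : ℝ} (hh : 0 < h) (f : ℝ → ℝ) :
    ∫ y in (-h)..h, f y * phiBar1 h y = ∫ y in (-h)..h, f y * (1 - |y| / h) := by
  apply intervalIntegral.integral_congr
  intro y hy
  rw [Set.uIcc_of_le (by linarith)] at hy
  show f y * phiBar1 h y = f y * (1 - |y| / h)
  unfold phiBar1
  split_ifs with hlt
  · rfl
  · have hy' : |y| = h := le_antisymm (abs_le.mpr ⟨hy.1, hy.2⟩) (not_lt.mp hlt)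
    rw [hy', div_self hh.ne']
    ring

end helpersX
section intparts
open MeasureTheory intervalIntegral Set

lemma II_congr' {f g : ℝ → ℝ} {a b : ℝ} (he : Set.EqOn f g (Set.uIcc a b))
    (hf : IntervalIntegrable f volume a b) : IntervalIntegrable g volume a b :=
  hf.congr (fun _ hx => he (uIoc_subset_uIcc hx))

lemma II_sub_left {β : ℝ} (hβ : -1 < β) (c a b : ℝ) :
    IntervalIntegrable (fun y => (c - y) ^ β) volume a b := by
  have := (intervalIntegrable_rpow' (a := c - a) (b := c - b) hβ).comp_sub_left c
  simpa using this

lemma II_piece {β : ℝ} (hβ : -1 < β) (c a b h : ℝ) (hab : ∀ y ∈ Set.uIcc a b, 0 ≤ c - y) :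
    IntervalIntegrable (fun y => |c - y| ^ β * (1 - |y| / h)) volume a b :=
  (II_congr' (fun y hy => by simp [abs_of_nonneg (hab y hy)]) (II_sub_left hβ c a b)).mul_continuousOn
    ((continuous_const.sub (continuous_abs.div_const h)).continuousOn)

lemma master {β : ℝ} (hβ : -1 < β) (hβ0 : β ≠ 0) (c a b A B : ℝ)
    (hab : ∀ y ∈ Set.uIcc a b, 0 ≤ c - y) :
    ∫ y in a..b, |c - y| ^ β * (A + B * (c - y)) =
      A * (((c - a) ^ (β + 1) - (c - b) ^ (β + 1)) / (β + 1)) +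
        B * (((c - a) ^ (β + 2) - (c - b) ^ (β + 2)) / (β + 2)) := by
  have h1 : (-1 : ℝ) < β + 1 := by linarith
  have key : ∫ y in a..b, |c - y| ^ β * (A + B * (c - y)) =
      ∫ y in a..b, (A * (c - y) ^ β + B * (c - y) ^ (β + 1)) := by
    apply integral_congr
    intro y hy
    have h0 : 0 ≤ c - y := hab y hy
    show |c - y| ^ β * (A + B * (c - y)) = A * (c - y) ^ β + B * (c - y) ^ (β + 1)
    rw [abs_of_nonneg h0]
    rcases eq_or_lt_of_le h0 with h0' | h0'
    · rw [← h0', Real.zero_rpow hβ0, Real.zero_rpow (by linarith : β + 1 ≠ 0)]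
      ring
    · rw [Real.rpow_add_one (ne_of_gt h0') β]
      ring
  rw [key, intervalIntegral.integral_add ((II_sub_left hβ c a b).const_mul A)
      ((II_sub_left h1 c a b).const_mul B),
    intervalIntegral.integral_const_mul, intervalIntegral.integral_const_mul,
    intervalIntegral.integral_comp_sub_left (fun x => x ^ β) c,
    intervalIntegral.integral_comp_sub_left (fun x => x ^ (β + 1)) c,
    integral_rpow (Or.inl hβ), integral_rpow (Or.inl h1)]
  ring_nf

lemma intW0 {β : ℝ} (hβ : -1 < β) (hβ0 : β ≠ 0) {h : ℝ} (hh : 0 < h) :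
    ∫ y in (-h)..h, |y| ^ β * (1 - |y| / h) =
      2 * h ^ (β + 1) / ((β + 1) * (β + 2)) := by
  have hh' : h ≠ 0 := hh.ne'
  have h1 : β + 1 ≠ 0 := by linarith
  have h2 : β + 2 ≠ 0 := by linarith
  have hiL : IntervalIntegrable (fun y => |y| ^ β * (1 - |y| / h)) volume (-h) 0 := by
    have := II_piece hβ 0 (-h) 0 h (fun y hy => by
      rw [Set.uIcc_of_le (by linarith)] at hy; simp only [zero_sub]; linarith [hy.2])
    simpa using this
  have hiR : IntervalIntegrable (fun y => |y| ^ β * (1 - |y| / h)) volume 0 h := by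
    have := (IntervalIntegrable.iff_comp_neg (f := fun y => |y| ^ β * (1 - |y| / h)) (a := 0) (b := -h)).mp hiL.symm
    simpa using this
  have flip : ∫ y in (0:ℝ)..h, |y| ^ β * (1 - |y| / h)
      = ∫ y in (-h)..(0:ℝ), |y| ^ β * (1 - |y| / h) := by
    have := intervalIntegral.integral_comp_neg (a := (0:ℝ)) (b := h)
      (fun y => |y| ^ β * (1 - |y| / h))
    simpa using this
  have hL : ∫ y in (-h)..(0:ℝ), |y| ^ β * (1 - |y| / h)
      = h ^ (β + 1) / (β + 1) + (-1/h) * (h ^ (β + 2) / (β + 2)) := by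
    have hcg : ∫ y in (-h)..(0:ℝ), |y| ^ β * (1 - |y| / h)
        = ∫ y in (-h)..(0:ℝ), |0 - y| ^ β * (1 + (-1/h) * (0 - y)) := by
      apply integral_congr
      intro y hy
      rw [Set.uIcc_of_le (by linarith)] at hy
      show |y| ^ β * (1 - |y| / h) = |0 - y| ^ β * (1 + (-1/h) * (0 - y))
      rw [zero_sub, abs_neg, abs_of_nonpos hy.2]
      field_simp
      ring
    rw [hcg, master hβ hβ0 0 (-h) 0 1 (-1/h) (fun y hy => by
      rw [Set.uIcc_of_le (by linarith)] at hy; simp only [zero_sub]; linarith [hy.2])]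
    rw [show (0:ℝ) - -h = h by ring, sub_zero, Real.zero_rpow h1, Real.zero_rpow h2]
    ring
  have eh : h ^ (β + 2) = h ^ (β + 1) * h := by
    rw [show β + 2 = (β+1) + 1 by ring]; exact Real.rpow_add_one hh' (β+1)
  rw [← intervalIntegral.integral_add_adjacent_intervals hiL hiR, flip, hL, eh]
  generalize h ^ (β + 1) = X
  field_simp
  ring

lemma intW1 {β : ℝ} (hβ : -1 < β) (hβ0 : β ≠ 0) {h : ℝ} (hh : 0 < h) :
    ∫ y in (-h)..h, |h - y| ^ β * (1 - |y| / h) =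
      h ^ (β + 1) * (2 ^ (β + 2) - 2) / ((β + 1) * (β + 2)) := by
  have hh' : h ≠ 0 := hh.ne'
  have h1 : β + 1 ≠ 0 := by linarith
  have h2 : β + 2 ≠ 0 := by linarith
  have habL : ∀ y ∈ Set.uIcc (-h) (0:ℝ), 0 ≤ h - y := fun y hy => by
    rw [Set.uIcc_of_le (by linarith)] at hy; linarith [hy.2]
  have habR : ∀ y ∈ Set.uIcc (0:ℝ) h, 0 ≤ h - y := fun y hy => by
    rw [Set.uIcc_of_le (by linarith)] at hy; linarith [hy.2]
  have hL : ∫ y in (-h)..(0:ℝ), |h - y| ^ β * (1 - |y| / h)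
      = 2 * (((2*h) ^ (β + 1) - h ^ (β + 1)) / (β + 1)) +
        (-1/h) * (((2*h) ^ (β + 2) - h ^ (β + 2)) / (β + 2)) := by
    have hcg : ∫ y in (-h)..(0:ℝ), |h - y| ^ β * (1 - |y| / h)
        = ∫ y in (-h)..(0:ℝ), |h - y| ^ β * (2 + (-1/h) * (h - y)) := by
      apply integral_congr
      intro y hy
      rw [Set.uIcc_of_le (by linarith)] at hy
      show |h - y| ^ β * (1 - |y| / h) = |h - y| ^ β * (2 + (-1/h) * (h - y))
      rw [abs_of_nonpos hy.2]
      congr 1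
      field_simp
      ring
    rw [hcg, master hβ hβ0 h (-h) 0 2 (-1/h) habL,
      show h - -h = 2*h by ring, sub_zero]
  have hR : ∫ y in (0:ℝ)..h, |h - y| ^ β * (1 - |y| / h)
      = (1/h) * (h ^ (β + 2) / (β + 2)) := by
    have hcg : ∫ y in (0:ℝ)..h, |h - y| ^ β * (1 - |y| / h)
        = ∫ y in (0:ℝ)..h, |h - y| ^ β * (0 + (1/h) * (h - y)) := by
      apply integral_congr
      intro y hy
      rw [Set.uIcc_of_le (by linarith)] at hy
      show |h - y| ^ β * (1 - |y| / h) = |h - y| ^ β * (0 + (1/h) * (h - y))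
      rw [abs_of_nonneg hy.1]
      congr 1
      field_simp
      ring
    rw [hcg, master hβ hβ0 h 0 h 0 (1/h) habR, sub_zero, sub_self,
      Real.zero_rpow h1, Real.zero_rpow h2]
    ring
  rw [← intervalIntegral.integral_add_adjacent_intervals
      (II_piece hβ h (-h) 0 h habL) (II_piece hβ h 0 h h habR), hL, hR,
    Real.mul_rpow (by norm_num : (0:ℝ) ≤ 2) hh.le,
    Real.mul_rpow (by norm_num : (0:ℝ) ≤ 2) hh.le,
    show h ^ (β + 2) = h ^ (β + 1) * h from by
      rw [show β + 2 = (β+1) + 1 by ring]; exact Real.rpow_add_one hh' (β+1),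
    show (2:ℝ) ^ (β + 2) = 2 ^ (β + 1) * 2 from by
      rw [show β + 2 = (β+1) + 1 by ring]; exact Real.rpow_add_one (by norm_num) (β+1)]
  generalize h ^ (β + 1) = X
  generalize (2:ℝ) ^ (β + 1) = T
  field_simp
  ring

lemma intW2 {β : ℝ} (hβ : -1 < β) (hβ0 : β ≠ 0) {h : ℝ} (hh : 0 < h) :
    ∫ y in (-h)..h, |2*h - y| ^ β * (1 - |y| / h) =
      h ^ (β + 1) * (3 ^ (β + 2) - 2 * 2 ^ (β + 2) + 1) / ((β + 1) * (β + 2)) := by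
  have hh' : h ≠ 0 := hh.ne'
  have h1 : β + 1 ≠ 0 := by linarith
  have h2 : β + 2 ≠ 0 := by linarith
  have habL : ∀ y ∈ Set.uIcc (-h) (0:ℝ), 0 ≤ 2*h - y := fun y hy => by
    rw [Set.uIcc_of_le (by linarith)] at hy; linarith [hy.2]
  have habR : ∀ y ∈ Set.uIcc (0:ℝ) h, 0 ≤ 2*h - y := fun y hy => by
    rw [Set.uIcc_of_le (by linarith)] at hy; linarith [hy.2]
  have hL : ∫ y in (-h)..(0:ℝ), |2*h - y| ^ β * (1 - |y| / h)
      = 3 * (((3*h) ^ (β + 1) - (2*h) ^ (β + 1)) / (β + 1)) +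
        (-1/h) * (((3*h) ^ (β + 2) - (2*h) ^ (β + 2)) / (β + 2)) := by
    have hcg : ∫ y in (-h)..(0:ℝ), |2*h - y| ^ β * (1 - |y| / h)
        = ∫ y in (-h)..(0:ℝ), |2*h - y| ^ β * (3 + (-1/h) * (2*h - y)) := by
      apply integral_congr
      intro y hy
      rw [Set.uIcc_of_le (by linarith)] at hy
      show |2*h - y| ^ β * (1 - |y| / h) = |2*h - y| ^ β * (3 + (-1/h) * (2*h - y))
      rw [abs_of_nonpos hy.2]
      congr 1
      field_simp
      ring
    rw [hcg, master hβ hβ0 (2*h) (-h) 0 3 (-1/h) habL,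
      show 2*h - -h = 3*h by ring, show 2*h - (0:ℝ) = 2*h by ring]
  have hR : ∫ y in (0:ℝ)..h, |2*h - y| ^ β * (1 - |y| / h)
      = (-1) * (((2*h) ^ (β + 1) - h ^ (β + 1)) / (β + 1)) +
        (1/h) * (((2*h) ^ (β + 2) - h ^ (β + 2)) / (β + 2)) := by
    have hcg : ∫ y in (0:ℝ)..h, |2*h - y| ^ β * (1 - |y| / h)
        = ∫ y in (0:ℝ)..h, |2*h - y| ^ β * ((-1) + (1/h) * (2*h - y)) := by
      apply integral_congr
      intro y hy
      rw [Set.uIcc_of_le (by linarith)] at hy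
      show |2*h - y| ^ β * (1 - |y| / h) = |2*h - y| ^ β * ((-1) + (1/h) * (2*h - y))
      rw [abs_of_nonneg hy.1]
      congr 1
      field_simp
      ring
    rw [hcg, master hβ hβ0 (2*h) 0 h (-1) (1/h) habR,
      show 2*h - (0:ℝ) = 2*h by ring, show 2*h - h = h by ring]
  rw [← intervalIntegral.integral_add_adjacent_intervals
      (II_piece hβ (2*h) (-h) 0 h habL) (II_piece hβ (2*h) 0 h h habR), hL, hR,
    Real.mul_rpow (by norm_num : (0:ℝ) ≤ 2) hh.le,
    Real.mul_rpow (by norm_num : (0:ℝ) ≤ 2) hh.le,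
    Real.mul_rpow (by norm_num : (0:ℝ) ≤ 3) hh.le,
    Real.mul_rpow (by norm_num : (0:ℝ) ≤ 3) hh.le,
    show h ^ (β + 2) = h ^ (β + 1) * h from by
      rw [show β + 2 = (β+1) + 1 by ring]; exact Real.rpow_add_one hh' (β+1),
    show (2:ℝ) ^ (β + 2) = 2 ^ (β + 1) * 2 from by
      rw [show β + 2 = (β+1) + 1 by ring]; exact Real.rpow_add_one (by norm_num) (β+1),
    show (3:ℝ) ^ (β + 2) = 3 ^ (β + 1) * 3 from by
      rw [show β + 2 = (β+1) + 1 by ring]; exact Real.rpow_add_one (by norm_num) (β+1)]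
  generalize h ^ (β + 1) = X
  generalize (2:ℝ) ^ (β + 1) = T
  generalize (3:ℝ) ^ (β + 1) = U
  field_simp
  ring
end intparts
section analytic
open Real Set

lemma log_fact : 9 * Real.log 3 < 16 * Real.log 2 := by
  have h := Real.log_lt_log (by norm_num : (0:ℝ) < 19683) (by norm_num : (19683:ℝ) < 65536)
  rw [show (19683:ℝ) = 3 ^ (9:ℕ) by norm_num, show (65536:ℝ) = 2 ^ (16:ℕ) by norm_num,
    Real.log_pow, Real.log_pow] at h
  push_cast at h
  linarith

lemma log_fact2 : 4 * Real.log 2 < 3 * Real.log 3 := by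
  have h := Real.log_lt_log (by norm_num : (0:ℝ) < 16) (by norm_num : (16:ℝ) < 27)
  rw [show (16:ℝ) = 2 ^ (4:ℕ) by norm_num, show (27:ℝ) = 3 ^ (3:ℕ) by norm_num,
    Real.log_pow, Real.log_pow] at h
  push_cast at h
  linarith

lemma hasDA (t : ℝ) : HasDerivAt (fun x : ℝ => 7 + (3:ℝ) ^ x - 4 * (2:ℝ) ^ x)
    (3 ^ t * Real.log 3 - 4 * (2 ^ t * Real.log 2)) t := by
  have h3 : HasDerivAt (fun x : ℝ => (3:ℝ) ^ x) (3 ^ t * Real.log 3) t :=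
    (Real.hasStrictDerivAt_const_rpow (by norm_num) t).hasDerivAt
  have h2 : HasDerivAt (fun x : ℝ => (2:ℝ) ^ x) (2 ^ t * Real.log 2) t :=
    (Real.hasStrictDerivAt_const_rpow (by norm_num) t).hasDerivAt
  exact ((h3.const_add 7).sub (h2.const_mul 4))

-- key derivative bound for t ≤ 2
lemma derivNeg {t : ℝ} (ht : t ≤ 2) : 3 ^ t * Real.log 3 - 4 * (2 ^ t * Real.log 2) < 0 := by
  have h32 : (3:ℝ) ^ t = 2 ^ t * (3/2) ^ t := by
    rw [← Real.mul_rpow (by norm_num) (by norm_num)]; norm_num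
  have hb : ((3:ℝ)/2) ^ t ≤ (3/2) ^ (2:ℝ) :=
    Real.rpow_le_rpow_of_exponent_le (by norm_num) ht
  have hb2 : ((3:ℝ)/2) ^ (2:ℝ) = 9/4 := by
    rw [show (2:ℝ) = ((2:ℕ):ℝ) by norm_num, Real.rpow_natCast]; norm_num
  have h2pos : (0:ℝ) < 2 ^ t := Real.rpow_pos_of_pos (by norm_num) t
  have hlog3 : (0:ℝ) < Real.log 3 := Real.log_pos (by norm_num)
  have hlf := log_fact
  have key : (3:ℝ) ^ t * Real.log 3 < 2 ^ t * (4 * Real.log 2) := by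
    calc (3:ℝ) ^ t * Real.log 3 = 2 ^ t * ((3/2) ^ t * Real.log 3) := by rw [h32]; ring
      _ ≤ 2 ^ t * (9/4 * Real.log 3) := by
          apply mul_le_mul_of_nonneg_left _ h2pos.le
          exact mul_le_mul_of_nonneg_right (le_of_le_of_eq hb hb2) hlog3.le
      _ < 2 ^ t * (4 * Real.log 2) := by
          apply mul_lt_mul_of_pos_left _ h2pos
          linarith
  linarith

lemma lemA {t : ℝ} (ht1 : 1 < t) (ht2 : t < 2) : 4 * (2:ℝ) ^ t < 7 + (3:ℝ) ^ t := by
  have anti : StrictAntiOn (fun x : ℝ => 7 + (3:ℝ) ^ x - 4 * (2:ℝ) ^ x) (Icc 1 2) := by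
    apply strictAntiOn_of_deriv_neg (convex_Icc 1 2)
    · exact Continuous.continuousOn
        ((continuous_const.add (continuous_iff_continuousAt.mpr fun x =>
            Real.continuousAt_const_rpow (by norm_num))).sub
          (continuous_const.mul (continuous_iff_continuousAt.mpr fun x =>
            Real.continuousAt_const_rpow (by norm_num))))
    · intro x hx
      rw [interior_Icc] at hx
      rw [(hasDA x).deriv]
      exact derivNeg hx.2.le
  have h := anti (Set.mem_Icc.mpr ⟨ht1.le, ht2.le⟩) (Set.mem_Icc.mpr ⟨by norm_num, le_refl 2⟩) ht2
  have e2 : (7:ℝ) + 3 ^ (2:ℝ) - 4 * 2 ^ (2:ℝ) = 0 := by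
    rw [show (2:ℝ) = ((2:ℕ):ℝ) by norm_num, Real.rpow_natCast, Real.rpow_natCast]; norm_num
  simp only [e2] at h
  linarith [h]

lemma hasDA2 (t : ℝ) : HasDerivAt (fun x : ℝ => (3:ℝ) ^ x * Real.log 3 - 4 * ((2:ℝ) ^ x * Real.log 2))
    (3 ^ t * Real.log 3 * Real.log 3 - 4 * (2 ^ t * Real.log 2 * Real.log 2)) t := by
  have h3 : HasDerivAt (fun x : ℝ => (3:ℝ) ^ x) (3 ^ t * Real.log 3) t :=
    (Real.hasStrictDerivAt_const_rpow (by norm_num) t).hasDerivAt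
  have h2 : HasDerivAt (fun x : ℝ => (2:ℝ) ^ x) (2 ^ t * Real.log 2) t :=
    (Real.hasStrictDerivAt_const_rpow (by norm_num) t).hasDerivAt
  exact ((h3.mul_const (Real.log 3)).sub ((h2.mul_const (Real.log 2)).const_mul 4))

lemma hasDAv (t : ℝ) : HasDerivAt (fun x : ℝ => 5 + (3:ℝ) ^ x - 4 * (2:ℝ) ^ x)
    (3 ^ t * Real.log 3 - 4 * (2 ^ t * Real.log 2)) t := by
  have h3 : HasDerivAt (fun x : ℝ => (3:ℝ) ^ x) (3 ^ t * Real.log 3) t :=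
    (Real.hasStrictDerivAt_const_rpow (by norm_num) t).hasDerivAt
  have h2 : HasDerivAt (fun x : ℝ => (2:ℝ) ^ x) (2 ^ t * Real.log 2) t :=
    (Real.hasStrictDerivAt_const_rpow (by norm_num) t).hasDerivAt
  exact ((h3.const_add 5).sub (h2.const_mul 4))

lemma lemB {σ : ℝ} (h2 : 2 < σ) (h3 : σ < 3) : 5 + (3:ℝ) ^ σ < 4 * (2:ℝ) ^ σ := by
  have hconv : StrictConvexOn ℝ (Icc (2:ℝ) 3) (fun x : ℝ => 5 + (3:ℝ) ^ x - 4 * (2:ℝ) ^ x) := by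
    apply strictConvexOn_of_deriv2_pos (convex_Icc 2 3)
    · exact Continuous.continuousOn
        ((continuous_const.add (continuous_iff_continuousAt.mpr fun x =>
            Real.continuousAt_const_rpow (by norm_num))).sub
          (continuous_const.mul (continuous_iff_continuousAt.mpr fun x =>
            Real.continuousAt_const_rpow (by norm_num))))
    · intro x hx
      rw [interior_Icc] at hx
      have hd1 : deriv (fun x : ℝ => 5 + (3:ℝ) ^ x - 4 * (2:ℝ) ^ x)
          = fun t => (3:ℝ) ^ t * Real.log 3 - 4 * ((2:ℝ) ^ t * Real.log 2) :=
        funext fun t => (hasDAv t).deriv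
      show 0 < deriv (deriv fun x : ℝ => 5 + (3:ℝ) ^ x - 4 * (2:ℝ) ^ x) x
      rw [hd1, (hasDA2 x).deriv]
      -- 0 < 3^x log²3 − 4·2^x log²2 for x > 2
      have h32 : (3:ℝ) ^ x = 2 ^ x * (3/2) ^ x := by
        rw [← Real.mul_rpow (by norm_num) (by norm_num)]; norm_num
      have hb : ((3:ℝ)/2) ^ (2:ℝ) ≤ (3/2) ^ x :=
        Real.rpow_le_rpow_of_exponent_le (by norm_num) hx.1.le
      have hb2 : ((3:ℝ)/2) ^ (2:ℝ) = 9/4 := by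
        rw [show (2:ℝ) = ((2:ℕ):ℝ) by norm_num, Real.rpow_natCast]; norm_num
      have h2pos : (0:ℝ) < 2 ^ x := Real.rpow_pos_of_pos (by norm_num) x
      have hlog3 : (0:ℝ) < Real.log 3 := Real.log_pos (by norm_num)
      have hlog2 : (0:ℝ) < Real.log 2 := Real.log_pos (by norm_num)
      have hlf := log_fact2
      have key : 2 ^ x * (4 * (Real.log 2 * Real.log 2)) < (3:ℝ) ^ x * Real.log 3 * Real.log 3 := by
        calc (2:ℝ) ^ x * (4 * (Real.log 2 * Real.log 2))
            < 2 ^ x * (9/4 * (Real.log 3 * Real.log 3)) := by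
              apply mul_lt_mul_of_pos_left _ h2pos
              nlinarith
          _ ≤ 2 ^ x * ((3/2) ^ x * (Real.log 3 * Real.log 3)) := by
              apply mul_le_mul_of_nonneg_left _ h2pos.le
              apply mul_le_mul_of_nonneg_right (le_of_eq_of_le hb2.symm hb)
              positivity
          _ = (3:ℝ) ^ x * Real.log 3 * Real.log 3 := by rw [h32]; ring
      linarith
  have h23 : ((2:ℝ)) ∈ Icc (2:ℝ) 3 := by norm_num
  have h33 : ((3:ℝ)) ∈ Icc (2:ℝ) 3 := by norm_num
  have ha : (0:ℝ) < 3 - σ := by linarith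
  have hbb : (0:ℝ) < σ - 2 := by linarith
  have hcomb := hconv.2 h23 h33 (by norm_num) ha hbb (by ring)
  simp only [smul_eq_mul] at hcomb
  rw [show (3 - σ) * 2 + (σ - 2) * 3 = σ by ring] at hcomb
  have e2 : (5:ℝ) + 3 ^ (2:ℝ) - 4 * 2 ^ (2:ℝ) = -2 := by
    rw [show (2:ℝ) = ((2:ℕ):ℝ) by norm_num, Real.rpow_natCast, Real.rpow_natCast]; norm_num
  have e3 : (5:ℝ) + 3 ^ (3:ℝ) - 4 * 2 ^ (3:ℝ) = 0 := by
    have a3 : (3:ℝ) ^ (3:ℝ) = 27 := by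
      rw [show (3:ℝ) ^ (3:ℝ) = (3:ℝ) ^ ((3:ℕ):ℝ) by norm_num, Real.rpow_natCast]; norm_num
    have a2 : (2:ℝ) ^ (3:ℝ) = 8 := by
      rw [show (2:ℝ) ^ (3:ℝ) = (2:ℝ) ^ ((3:ℕ):ℝ) by norm_num, Real.rpow_natCast]; norm_num
    rw [a3, a2]; norm_num
  rw [e2, e3] at hcomb
  nlinarith [hcomb]
end analytic

section mainsec
open MeasureTheory intervalIntegral Set

lemma omega0_eq {s h : ℝ} (hβ : -1 < 1 - 2*s) (hβ0 : 1 - 2*s ≠ 0) (hh : 0 < h) :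
    omegaBar s h 0 = c1m s *
      (2 * h ^ ((1 - 2*s) + 1) / (((1 - 2*s) + 1) * ((1 - 2*s) + 2))) := by
  unfold omegaBar
  congr 1
  rw [show ∫ y in (-h)..h, |((0:ℤ):ℝ) * h - y| ^ (1 - 2*s) * phiBar1 h y
      = ∫ y in (-h)..h, |y| ^ (1 - 2*s) * phiBar1 h y from by
    simp only [Int.cast_zero, zero_mul, zero_sub, abs_neg],
    om_congr hh (fun y => |y| ^ (1 - 2*s)), intW0 hβ hβ0 hh]

lemma omega1_eq {s h : ℝ} (hβ : -1 < 1 - 2*s) (hβ0 : 1 - 2*s ≠ 0) (hh : 0 < h) :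
    omegaBar s h 1 = c1m s *
      (h ^ ((1 - 2*s) + 1) * (2 ^ ((1 - 2*s) + 2) - 2) /
        (((1 - 2*s) + 1) * ((1 - 2*s) + 2))) := by
  unfold omegaBar
  congr 1
  rw [show ∫ y in (-h)..h, |((1:ℤ):ℝ) * h - y| ^ (1 - 2*s) * phiBar1 h y
      = ∫ y in (-h)..h, |h - y| ^ (1 - 2*s) * phiBar1 h y from by
    simp only [Int.cast_one, one_mul],
    om_congr hh (fun y => |h - y| ^ (1 - 2*s)), intW1 hβ hβ0 hh]

lemma omega2_eq {s h : ℝ} (hβ : -1 < 1 - 2*s) (hβ0 : 1 - 2*s ≠ 0) (hh : 0 < h) :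
    omegaBar s h 2 = c1m s *
      (h ^ ((1 - 2*s) + 1) * (3 ^ ((1 - 2*s) + 2) - 2 * 2 ^ ((1 - 2*s) + 2) + 1) /
        (((1 - 2*s) + 1) * ((1 - 2*s) + 2))) := by
  unfold omegaBar
  congr 1
  rw [show ∫ y in (-h)..h, |((2:ℤ):ℝ) * h - y| ^ (1 - 2*s) * phiBar1 h y
      = ∫ y in (-h)..h, |2 * h - y| ^ (1 - 2*s) * phiBar1 h y from by
    norm_num,
    om_congr hh (fun y => |2 * h - y| ^ (1 - 2*s)), intW2 hβ hβ0 hh]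

end mainsec


/-- the modified weight `w₁^M = -(ω̄₀^M - 2ω̄₁ + ω̄₂)/h²` is strictly negative. -/
theorem stmt10 (s : ℝ) (hs : s ∈ Set.Ioo (0 : ℝ) (1 / 2) ∪ Set.Ioo (1 / 2 : ℝ) 1)
    (h : ℝ) (hh : 0 < h) :
    -(omegaBar0M s h - 2 * omegaBar s h 1 + omegaBar s h 2) / h ^ 2 < 0 := by
  have hs0 : 0 < s := by rcases hs with hs | hs <;> [exact hs.1; linarith [hs.1]]
  have hs1 : s < 1 := by rcases hs with hs | hs <;> [linarith [hs.2]; exact hs.2]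
  have hsne : s ≠ 1/2 := by rcases hs with hs | hs <;> [exact ne_of_lt hs.2; exact (ne_of_gt hs.1)]
  have hβ : -1 < 1 - 2*s := by linarith
  have hβ0 : 1 - 2*s ≠ 0 := by intro hc; apply hsne; linarith
  have h1pos : 0 < (1 - 2*s) + 1 := by linarith
  have h2pos : 0 < (1 - 2*s) + 2 := by linarith
  have hXpos : 0 < h ^ ((1 - 2*s) + 1) := Real.rpow_pos_of_pos hh _
  have hDpos : 0 < ((1 - 2*s) + 1) * ((1 - 2*s) + 2) := mul_pos h1pos h2pos
  have o0 := omega0_eq (s := s) (h := h) hβ hβ0 hh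
  have o1 := omega1_eq (s := s) (h := h) hβ hβ0 hh
  have o2 := omega2_eq (s := s) (h := h) hβ hβ0 hh
  have hw' : wgt s h 1 =
      -(omegaBar s h 0 - 2 * omegaBar s h 1 + omegaBar s h 2) / h ^ 2 := by
    unfold wgt; norm_num
  unfold omegaBar0M
  split_ifs with hw
  · -- modified case: need ω₂ - 2ω₁ > 0
    rcases hs with hsL | hsR
    · -- s < 1/2, c1m < 0, exponent q = 3-2s ∈ (2,3)
      have hc : c1m s < 0 := c1m_neg hs0 hsL.2
      have hBB : (5:ℝ) + 3 ^ ((1 - 2*s) + 2) < 4 * 2 ^ ((1 - 2*s) + 2) :=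
        lemB (by linarith [hsL.2]) (by linarith [hsL.1])
      have key : omegaBar s h 2 - 2 * omegaBar s h 1 =
          (c1m s * h ^ ((1 - 2*s) + 1)) *
            ((3 ^ ((1 - 2*s) + 2) - 4 * 2 ^ ((1 - 2*s) + 2) + 5) /
              (((1 - 2*s) + 1) * ((1 - 2*s) + 2))) := by
        rw [o1, o2]; ring
      have hpos : 0 < omegaBar s h 2 - 2 * omegaBar s h 1 := by
        rw [key]
        exact mul_pos_of_neg_of_neg (mul_neg_of_neg_of_pos hc hXpos)
          (div_neg_of_neg_of_pos (by linarith) hDpos)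
      apply div_neg_of_neg_of_pos _ (by positivity)
      linarith
    · -- s > 1/2: contradiction with 0 ≤ w₁
      exfalso
      have hc : 0 < c1m s := c1m_pos hsR.1 hs1
      have hAA : 4 * (2:ℝ) ^ ((1 - 2*s) + 2) < 7 + 3 ^ ((1 - 2*s) + 2) :=
        lemA (by linarith [hsR.2]) (by linarith [hsR.1])
      have key : omegaBar s h 0 - 2 * omegaBar s h 1 + omegaBar s h 2 =
          (c1m s * h ^ ((1 - 2*s) + 1)) *
            ((3 ^ ((1 - 2*s) + 2) - 4 * 2 ^ ((1 - 2*s) + 2) + 7) /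
              (((1 - 2*s) + 1) * ((1 - 2*s) + 2))) := by
        rw [o0, o1, o2]; ring
      have hpos : 0 < omegaBar s h 0 - 2 * omegaBar s h 1 + omegaBar s h 2 := by
        rw [key]
        exact mul_pos (mul_pos hc hXpos) (div_pos (by linarith) hDpos)
      have : wgt s h 1 < 0 := by
        rw [hw']
        apply div_neg_of_neg_of_pos _ (by positivity)
        linarith
      linarith
  · rw [← hw']
    exact not_le.mp hw
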